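/- Let X be a real Banach space of dimension at least 2. Then C_NJ(X) = sup{ 2·L_X((1 − η)/2) / (1 + η²) : η ∈ (0, 1] }. -/

import Mathlib

/-- The geometric constant `L_X(t)` defined via isosceles orthogonality. -/
noncomputable def LX (X : Type*) [NormedAddCommGroup X] [NormedSpace ℝ X] (t : ℝ) : ℝ :=
  sSup {r : ℝ | ∃ x y : X, (x, y) ≠ (0, 0) ∧ ‖x + y‖ = ‖x - y‖ ∧
    r = (‖t • x + (1 - t) • y‖ ^ 2 + ‖(1 - t) • x + t • y‖ ^ 2) / ‖x + y‖ ^ 2}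

/-- The von Neumann–Jordan constant. -/
noncomputable def CNJ (X : Type*) [NormedAddCommGroup X] [NormedSpace ℝ X] : ℝ :=
  sSup {r : ℝ | ∃ x y : X, (x, y) ≠ (0, 0) ∧
    r = (‖x + y‖ ^ 2 + ‖x - y‖ ^ 2) / (2 * (‖x‖ ^ 2 + ‖y‖ ^ 2))}

section Aux

variable {X : Type*} [NormedAddCommGroup X] [NormedSpace ℝ X]

/-- Key algebraic identity relating the CNJ-type ratio of `a := 2⁻¹ • (x+y)` and
`b := (η/2) • (x-y)` to the `L_X((1-η)/2)`-type ratio of `x, y`, under isosceles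
orthogonality `‖x + y‖ = ‖x - y‖`. -/
private lemma key_eq (η : ℝ) (hη : 0 < η) (x y : X) (hiso : ‖x + y‖ = ‖x - y‖) :
    (‖(2:ℝ)⁻¹ • (x + y) + (η / 2) • (x - y)‖ ^ 2 +
        ‖(2:ℝ)⁻¹ • (x + y) - (η / 2) • (x - y)‖ ^ 2) /
      (2 * (‖(2:ℝ)⁻¹ • (x + y)‖ ^ 2 + ‖(η / 2) • (x - y)‖ ^ 2)) =
    2 * ((‖((1 - η) / 2) • x + (1 - (1 - η) / 2) • y‖ ^ 2 +
        ‖(1 - (1 - η) / 2) • x + ((1 - η) / 2) • y‖ ^ 2) / ‖x + y‖ ^ 2) / (1 + η ^ 2) := by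
  have h1 : (2:ℝ)⁻¹ • (x + y) + (η / 2) • (x - y)
      = (1 - (1 - η) / 2) • x + ((1 - η) / 2) • y := by module
  have h2 : (2:ℝ)⁻¹ • (x + y) - (η / 2) • (x - y)
      = ((1 - η) / 2) • x + (1 - (1 - η) / 2) • y := by module
  have hna : ‖(2:ℝ)⁻¹ • (x + y)‖ = ‖x + y‖ / 2 := by
    rw [norm_smul, Real.norm_eq_abs, abs_of_pos (by norm_num : (0:ℝ) < 2⁻¹)]
    ring
  have hnb : ‖(η / 2) • (x - y)‖ = η / 2 * ‖x + y‖ := by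
    rw [norm_smul, Real.norm_eq_abs, abs_of_pos (by positivity : (0:ℝ) < η / 2), ← hiso]
  rw [h1, h2, hna, hnb]
  rcases eq_or_ne (‖x + y‖) 0 with hc | hc
  · simp [hc]
  · have hη2 : (1 : ℝ) + η ^ 2 ≠ 0 := by positivity
    field_simp
    ring

/-- Every element of the defining set of `L_X(t)` is at most `2`, for `t ∈ [0,1]`. -/
private lemma S_bdd (t : ℝ) (ht0 : 0 ≤ t) (ht1 : t ≤ 1) :
    ∀ r ∈ {r : ℝ | ∃ x y : X, (x, y) ≠ (0, 0) ∧ ‖x + y‖ = ‖x - y‖ ∧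
      r = (‖t • x + (1 - t) • y‖ ^ 2 + ‖(1 - t) • x + t • y‖ ^ 2) / ‖x + y‖ ^ 2}, r ≤ 2 := by
  rintro r ⟨x, y, -, hiso, rfl⟩
  rcases eq_or_ne (‖x + y‖) 0 with hc | hc
  · simp [hc]
  · have hc0 : 0 < ‖x + y‖ := (norm_nonneg _).lt_of_ne' hc
    have hx : ‖x‖ ≤ ‖x + y‖ := by
      have h2 : (2:ℝ) • x = (x + y) + (x - y) := by module
      have h2n : ‖(2:ℝ) • x‖ = 2 * ‖x‖ := by
        rw [norm_smul, Real.norm_eq_abs]; norm_num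
      have hle := norm_add_le (x + y) (x - y)
      rw [← h2, h2n] at hle
      linarith [hiso ▸ hle]
    have hy : ‖y‖ ≤ ‖x + y‖ := by
      have h2 : (2:ℝ) • y = (x + y) - (x - y) := by module
      have h2n : ‖(2:ℝ) • y‖ = 2 * ‖y‖ := by
        rw [norm_smul, Real.norm_eq_abs]; norm_num
      have hle := norm_sub_le (x + y) (x - y)
      rw [← h2, h2n] at hle
      linarith [hiso ▸ hle]
    have hP : ‖t • x + (1 - t) • y‖ ≤ ‖x + y‖ := by
      calc ‖t • x + (1 - t) • y‖ ≤ ‖t • x‖ + ‖(1 - t) • y‖ := norm_add_le _ _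
        _ = t * ‖x‖ + (1 - t) * ‖y‖ := by
            rw [norm_smul, norm_smul, Real.norm_eq_abs, Real.norm_eq_abs,
              abs_of_nonneg ht0, abs_of_nonneg (by linarith : (0:ℝ) ≤ 1 - t)]
        _ ≤ ‖x + y‖ := by
            nlinarith [mul_nonneg ht0 (sub_nonneg.2 hx),
              mul_nonneg (by linarith : (0:ℝ) ≤ 1 - t) (sub_nonneg.2 hy)]
    have hQ : ‖(1 - t) • x + t • y‖ ≤ ‖x + y‖ := by
      calc ‖(1 - t) • x + t • y‖ ≤ ‖(1 - t) • x‖ + ‖t • y‖ := norm_add_le _ _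
        _ = (1 - t) * ‖x‖ + t * ‖y‖ := by
            rw [norm_smul, norm_smul, Real.norm_eq_abs, Real.norm_eq_abs,
              abs_of_nonneg (by linarith : (0:ℝ) ≤ 1 - t), abs_of_nonneg ht0]
        _ ≤ ‖x + y‖ := by
            nlinarith [mul_nonneg ht0 (sub_nonneg.2 hy),
              mul_nonneg (by linarith : (0:ℝ) ≤ 1 - t) (sub_nonneg.2 hx)]
    rw [div_le_iff₀ (by positivity : (0:ℝ) < ‖x + y‖ ^ 2)]
    nlinarith [norm_nonneg (t • x + (1 - t) • y), norm_nonneg ((1 - t) • x + t • y)]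

/-- Every element of the defining set of `C_NJ` is at most `2`. -/
private lemma A_bdd :
    ∀ r ∈ {r : ℝ | ∃ x y : X, (x, y) ≠ (0, 0) ∧
      r = (‖x + y‖ ^ 2 + ‖x - y‖ ^ 2) / (2 * (‖x‖ ^ 2 + ‖y‖ ^ 2))}, r ≤ 2 := by
  rintro r ⟨x, y, hne, rfl⟩
  have hxy : x ≠ 0 ∨ y ≠ 0 := by
    by_contra h
    push_neg at h
    exact hne (by simp [h.1, h.2])
  have hpos : 0 < ‖x‖ ^ 2 + ‖y‖ ^ 2 := by
    rcases hxy with h | h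
    · have hx := pow_pos (norm_pos_iff.2 h) 2
      nlinarith [sq_nonneg ‖y‖]
    · have hy := pow_pos (norm_pos_iff.2 h) 2
      nlinarith [sq_nonneg ‖x‖]
  rw [div_le_iff₀ (by linarith)]
  nlinarith [norm_add_le x y, norm_sub_le x y, norm_nonneg (x + y), norm_nonneg (x - y),
    norm_nonneg x, norm_nonneg y, sq_nonneg (‖x‖ - ‖y‖)]

end Aux

theorem stmt_8 (X : Type*) [NormedAddCommGroup X] [NormedSpace ℝ X] [CompleteSpace X]
    (hdim : 2 ≤ Module.rank ℝ X) :
    CNJ X = sSup {r : ℝ | ∃ η ∈ Set.Ioc (0 : ℝ) 1,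
      r = 2 * LX X ((1 - η) / 2) / (1 + η ^ 2)} := by
  have hnt : Nontrivial X := by
    rw [← rank_pos_iff_nontrivial (R := ℝ)]
    exact lt_of_lt_of_le (by norm_num) hdim
  obtain ⟨v, hv⟩ := exists_ne (0 : X)
  have hvn : ‖v‖ ≠ 0 := norm_ne_zero_iff.2 hv
  -- abbreviations
  set B := {r : ℝ | ∃ η ∈ Set.Ioc (0 : ℝ) 1, r = 2 * LX X ((1 - η) / 2) / (1 + η ^ 2)} with hBdef
  have hSmem : ∀ t : ℝ, (t ^ 2 + (1 - t) ^ 2) ∈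
      {r : ℝ | ∃ x y : X, (x, y) ≠ (0, 0) ∧ ‖x + y‖ = ‖x - y‖ ∧
        r = (‖t • x + (1 - t) • y‖ ^ 2 + ‖(1 - t) • x + t • y‖ ^ 2) / ‖x + y‖ ^ 2} := by
    intro t
    refine ⟨v, 0, by simp [hv], by simp, ?_⟩
    rw [smul_zero, smul_zero, add_zero, add_zero, add_zero, norm_smul, norm_smul,
      Real.norm_eq_abs, Real.norm_eq_abs, mul_pow, mul_pow, sq_abs, sq_abs]
    field_simp
  have hSne : ∀ t : ℝ, Set.Nonempty
      {r : ℝ | ∃ x y : X, (x, y) ≠ (0, 0) ∧ ‖x + y‖ = ‖x - y‖ ∧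
        r = (‖t • x + (1 - t) • y‖ ^ 2 + ‖(1 - t) • x + t • y‖ ^ 2) / ‖x + y‖ ^ 2} :=
    fun t => ⟨_, hSmem t⟩
  have hSbdd : ∀ t : ℝ, BddAbove
      {r : ℝ | ∃ x y : X, (x, y) ≠ (0, 0) ∧ ‖x + y‖ = ‖x - y‖ ∧
        r = (‖t • x + (1 - t) • y‖ ^ 2 + ‖(1 - t) • x + t • y‖ ^ 2) / ‖x + y‖ ^ 2} := by
    intro t
    refine ⟨2 * (|t| + |1 - t|) ^ 2, ?_⟩
    rintro r ⟨x, y, -, hiso, rfl⟩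
    rcases eq_or_ne (‖x + y‖) 0 with hc | hc
    · simp [hc]
      positivity
    · have hc0 : 0 < ‖x + y‖ := (norm_nonneg _).lt_of_ne' hc
      have hx : ‖x‖ ≤ ‖x + y‖ := by
        have h2 : (2:ℝ) • x = (x + y) + (x - y) := by module
        have h2n : ‖(2:ℝ) • x‖ = 2 * ‖x‖ := by
          rw [norm_smul, Real.norm_eq_abs]; norm_num
        have hle := norm_add_le (x + y) (x - y)
        rw [← h2, h2n] at hle
        linarith [hiso ▸ hle]
      have hy : ‖y‖ ≤ ‖x + y‖ := by
        have h2 : (2:ℝ) • y = (x + y) - (x - y) := by module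
        have h2n : ‖(2:ℝ) • y‖ = 2 * ‖y‖ := by
          rw [norm_smul, Real.norm_eq_abs]; norm_num
        have hle := norm_sub_le (x + y) (x - y)
        rw [← h2, h2n] at hle
        linarith [hiso ▸ hle]
      have hP : ‖t • x + (1 - t) • y‖ ≤ (|t| + |1 - t|) * ‖x + y‖ := by
        calc ‖t • x + (1 - t) • y‖ ≤ ‖t • x‖ + ‖(1 - t) • y‖ := norm_add_le _ _
          _ = |t| * ‖x‖ + |1 - t| * ‖y‖ := by
              rw [norm_smul, norm_smul, Real.norm_eq_abs, Real.norm_eq_abs]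
          _ ≤ (|t| + |1 - t|) * ‖x + y‖ := by
              nlinarith [mul_nonneg (abs_nonneg t) (sub_nonneg.2 hx),
                mul_nonneg (abs_nonneg (1 - t)) (sub_nonneg.2 hy)]
      have hQ : ‖(1 - t) • x + t • y‖ ≤ (|t| + |1 - t|) * ‖x + y‖ := by
        calc ‖(1 - t) • x + t • y‖ ≤ ‖(1 - t) • x‖ + ‖t • y‖ := norm_add_le _ _
          _ = |1 - t| * ‖x‖ + |t| * ‖y‖ := by
              rw [norm_smul, norm_smul, Real.norm_eq_abs, Real.norm_eq_abs]
          _ ≤ (|t| + |1 - t|) * ‖x + y‖ := by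
              nlinarith [mul_nonneg (abs_nonneg t) (sub_nonneg.2 hy),
                mul_nonneg (abs_nonneg (1 - t)) (sub_nonneg.2 hx)]
      rw [div_le_iff₀ (by positivity : (0:ℝ) < ‖x + y‖ ^ 2)]
      nlinarith [norm_nonneg (t • x + (1 - t) • y), norm_nonneg ((1 - t) • x + t • y),
        mul_nonneg (add_nonneg (abs_nonneg t) (abs_nonneg (1 - t))) hc0.le]
  -- LX bounds
  have hLX_le : ∀ t : ℝ, 0 ≤ t → t ≤ 1 → LX X t ≤ 2 := fun t ht0 ht1 =>
    csSup_le (hSne t) (S_bdd t ht0 ht1)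
  have hLX_ge : ∀ t : ℝ, t ^ 2 + (1 - t) ^ 2 ≤ LX X t := fun t =>
    le_csSup (hSbdd t) (hSmem t)
  -- B is nonempty and bounded above
  have hBne : B.Nonempty := ⟨2 * LX X ((1 - 1) / 2) / (1 + 1 ^ 2), 1, by norm_num, rfl⟩
  have hBbdd : BddAbove B := by
    refine ⟨4, ?_⟩
    rintro r ⟨η, ⟨hη, hη1⟩, rfl⟩
    have ht0 : (0:ℝ) ≤ (1 - η) / 2 := by linarith
    have ht1 : (1 - η) / 2 ≤ 1 := by linarith
    have hL2 := hLX_le _ ht0 ht1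
    have hL0 : 0 ≤ LX X ((1 - η) / 2) := by
      refine le_trans ?_ (hLX_ge _)
      positivity
    calc 2 * LX X ((1 - η) / 2) / (1 + η ^ 2) ≤ 2 * LX X ((1 - η) / 2) / 1 := by
          apply div_le_div_of_nonneg_left (by linarith) (by norm_num) (by nlinarith [sq_nonneg η])
      _ ≤ 4 := by rw [div_one]; linarith
  -- A facts
  have hAne : Set.Nonempty {r : ℝ | ∃ x y : X, (x, y) ≠ (0, 0) ∧
      r = (‖x + y‖ ^ 2 + ‖x - y‖ ^ 2) / (2 * (‖x‖ ^ 2 + ‖y‖ ^ 2))} :=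
    ⟨_, v, 0, by simp [hv], rfl⟩
  have hAbdd : BddAbove {r : ℝ | ∃ x y : X, (x, y) ≠ (0, 0) ∧
      r = (‖x + y‖ ^ 2 + ‖x - y‖ ^ 2) / (2 * (‖x‖ ^ 2 + ‖y‖ ^ 2))} := ⟨2, A_bdd⟩
  show sSup _ = sSup B
  apply le_antisymm
  · -- CNJ ≤ sSup B
    apply csSup_le hAne
    have hmain : ∀ x y : X, (x, y) ≠ (0, 0) → ‖y‖ ≤ ‖x‖ →
        (‖x + y‖ ^ 2 + ‖x - y‖ ^ 2) / (2 * (‖x‖ ^ 2 + ‖y‖ ^ 2)) ≤ sSup B := by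
      intro x y hne hle
      have hx0 : x ≠ 0 := by
        rintro rfl
        have hy0 : ‖y‖ = 0 := le_antisymm (by simpa using hle) (norm_nonneg y)
        exact hne (by simp [norm_eq_zero.1 hy0])
      have hx : 0 < ‖x‖ := norm_pos_iff.2 hx0
      rcases eq_or_ne y 0 with rfl | hy0
      · -- ratio is 1; show 1 ≤ sSup B
        have hval : (‖x + 0‖ ^ 2 + ‖x - 0‖ ^ 2) / (2 * (‖x‖ ^ 2 + ‖(0:X)‖ ^ 2)) = 1 := by
          have hxn : ‖x‖ ≠ 0 := ne_of_gt hx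
          rw [add_zero, sub_zero, norm_zero]
          field_simp
          ring
        rw [hval]
        have h1 : (1:ℝ) ≤ LX X 0 := by
          have := hLX_ge 0
          norm_num at this
          linarith
        have hmem : 2 * LX X ((1 - 1) / 2) / (1 + 1 ^ 2) ∈ B := ⟨1, by norm_num, rfl⟩
        have h2 : 2 * LX X ((1 - 1) / 2) / (1 + 1 ^ 2) ≤ sSup B := le_csSup hBbdd hmem
        have h3 : 2 * LX X ((1 - 1) / 2) / (1 + 1 ^ 2) = LX X 0 := by norm_num
        linarith [h3 ▸ h2]
      · have hy : 0 < ‖y‖ := norm_pos_iff.2 hy0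
        set η := ‖y‖ / ‖x‖ with hηdef
        have hη : 0 < η := div_pos hy hx
        have hη1 : η ≤ 1 := (div_le_one hx).2 hle
        have hηne : η ≠ 0 := ne_of_gt hη
        set x' := x + η⁻¹ • y with hx'def
        set y' := x - η⁻¹ • y with hy'def
        have hsum : x' + y' = (2:ℝ) • x := by rw [hx'def, hy'def]; module
        have hdiff : x' - y' = (2 * η⁻¹) • y := by rw [hx'def, hy'def]; module
        have hinv : η⁻¹ = ‖x‖ / ‖y‖ := by rw [hηdef, inv_div]
        have hiso' : ‖x' + y'‖ = ‖x' - y'‖ := by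
          rw [hsum, hdiff, norm_smul, norm_smul, Real.norm_eq_abs, Real.norm_eq_abs,
            abs_of_pos (by norm_num : (0:ℝ) < 2),
            abs_of_pos (by positivity : (0:ℝ) < 2 * η⁻¹), hinv]
          field_simp
        have hax : (2:ℝ)⁻¹ • (x' + y') = x := by
          rw [hsum, smul_smul]; norm_num
        have hby : (η / 2) • (x' - y') = y := by
          rw [hdiff, smul_smul]
          rw [show η / 2 * (2 * η⁻¹) = 1 by field_simp]
          exact one_smul _ _
        have hkey := key_eq η hη x' y' hiso'
        rw [hax, hby] at hkey
        have hne' : (x', y') ≠ (0, 0) := by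
          intro h
          rw [Prod.mk.injEq] at h
          apply hx0
          rw [← hax, h.1, h.2, add_zero, smul_zero]
        set t := (1 - η) / 2 with htdef
        have ht0 : (0:ℝ) ≤ t := by rw [htdef]; linarith
        have ht1 : t ≤ 1 := by rw [htdef]; linarith
        have hsmem : (‖t • x' + (1 - t) • y'‖ ^ 2 + ‖(1 - t) • x' + t • y'‖ ^ 2) / ‖x' + y'‖ ^ 2
            ∈ {r : ℝ | ∃ x y : X, (x, y) ≠ (0, 0) ∧ ‖x + y‖ = ‖x - y‖ ∧
              r = (‖t • x + (1 - t) • y‖ ^ 2 + ‖(1 - t) • x + t • y‖ ^ 2) / ‖x + y‖ ^ 2} :=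
          ⟨x', y', hne', hiso', rfl⟩
        have hsle : (‖t • x' + (1 - t) • y'‖ ^ 2 + ‖(1 - t) • x' + t • y'‖ ^ 2) / ‖x' + y'‖ ^ 2
            ≤ LX X t := le_csSup (hSbdd t) hsmem
        rw [hkey]
        have hstep : 2 * ((‖t • x' + (1 - t) • y'‖ ^ 2 + ‖(1 - t) • x' + t • y'‖ ^ 2)
            / ‖x' + y'‖ ^ 2) / (1 + η ^ 2) ≤ 2 * LX X t / (1 + η ^ 2) := by
          apply div_le_div_of_nonneg_right ?_ (by positivity)
          linarith
        refine le_trans hstep (le_csSup hBbdd ?_)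
        exact ⟨η, ⟨hη, hη1⟩, rfl⟩
    rintro r ⟨x, y, hne, rfl⟩
    rcases le_total ‖y‖ ‖x‖ with h | h
    · exact hmain x y hne h
    · have heq : (‖x + y‖ ^ 2 + ‖x - y‖ ^ 2) / (2 * (‖x‖ ^ 2 + ‖y‖ ^ 2))
          = (‖y + x‖ ^ 2 + ‖y - x‖ ^ 2) / (2 * (‖y‖ ^ 2 + ‖x‖ ^ 2)) := by
        rw [add_comm x y, norm_sub_rev x y, add_comm (‖x‖ ^ 2)]
      have hne' : (y, x) ≠ (0, 0) := by
        intro hc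
        rw [Prod.mk.injEq] at hc
        exact hne (by simp [hc.1, hc.2])
      rw [heq]
      exact hmain y x hne' h
  · -- sSup B ≤ CNJ
    apply csSup_le hBne
    rintro r ⟨η, ⟨hη, hη1⟩, rfl⟩
    set t := (1 - η) / 2 with htdef
    rw [div_le_iff₀ (by positivity : (0:ℝ) < 1 + η ^ 2)]
    have hkey2 : LX X t ≤ sSup {r : ℝ | ∃ x y : X, (x, y) ≠ (0, 0) ∧
        r = (‖x + y‖ ^ 2 + ‖x - y‖ ^ 2) / (2 * (‖x‖ ^ 2 + ‖y‖ ^ 2))} * (1 + η ^ 2) / 2 := by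
      apply csSup_le (hSne t)
      rintro s ⟨x, y, hne, hiso, rfl⟩
      have hxy0 : x + y ≠ 0 := by
        intro h
        have h2 : ‖x - y‖ = 0 := by rw [← hiso, h, norm_zero]
        have hxy : x = y := sub_eq_zero.1 (norm_eq_zero.1 h2)
        have hx0 : x = 0 := by
          have : (2:ℝ) • x = 0 := by rw [two_smul]; rw [hxy] at h ⊢; exact h
          simpa using (smul_eq_zero.1 this).resolve_left (by norm_num)
        exact hne (by simp [hx0, hx0 ▸ hxy.symm])
      have ha0 : (2:ℝ)⁻¹ • (x + y) ≠ 0 := smul_ne_zero (by norm_num) hxy0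
      have hkey := key_eq η hη x y hiso
      have hmem : (‖(2:ℝ)⁻¹ • (x + y) + (η / 2) • (x - y)‖ ^ 2 +
            ‖(2:ℝ)⁻¹ • (x + y) - (η / 2) • (x - y)‖ ^ 2) /
          (2 * (‖(2:ℝ)⁻¹ • (x + y)‖ ^ 2 + ‖(η / 2) • (x - y)‖ ^ 2))
          ∈ {r : ℝ | ∃ x y : X, (x, y) ≠ (0, 0) ∧
            r = (‖x + y‖ ^ 2 + ‖x - y‖ ^ 2) / (2 * (‖x‖ ^ 2 + ‖y‖ ^ 2))} := by
        refine ⟨(2:ℝ)⁻¹ • (x + y), (η / 2) • (x - y), ?_, rfl⟩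
        intro hc
        rw [Prod.mk.injEq] at hc
        exact ha0 hc.1
      have h1 := le_csSup hAbdd hmem
      rw [hkey] at h1
      rw [div_le_iff₀ (by positivity : (0:ℝ) < 1 + η ^ 2)] at h1
      linarith
    linarith
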